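/- Let K be a field, (A, e_A) and (B, e_B) finite-dimensional commutative associative unital K-algebras, g_A a nondegenerate invariant symmetric bilinear form on A, g_B an invariant symmetric bilinear form on B, and α : B → A a unital K-algebra homomorphism (α(v·w) = α(v)·α(w) and α(e_B) = e_A). Assume the bilinear form g_B − α*g_A on B, (v,w) ↦ g_B(v,w) − g_A(α(v), α(w)), is nondegenerate. Define the multiplication ∘ on A ⊕ B by (x,v) ∘ (y,w) = (x·y + x·α(w) + y·α(v), v·w) and the symmetric bilinear form g on A ⊕ B by g((x,v),(y,w)) = g_A(x,y) + g_A(α(v), y) + g_A(x, α(w)) + g_B(v,w). Then (A ⊕ B, ∘, (0, e_B), g) is a commutative Frobenius algebra: ∘ is commutative and associative with unit (0, e_B), and g is a nondegenerate symmetric bilinear form invariant with respect to ∘. -/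
import Mathlib


/-- The extended multiplication on `A ⊕ B` induced by an algebra morphism `α : B → A`:
`(x,v) ∘ (y,w) = (x·y + x·α(w) + y·α(v), v·w)`. -/
def extMul {K A B : Type*} [Field K] [CommRing A] [CommRing B]
    [Algebra K A] [Algebra K B] (α : B →ₗ[K] A) : A × B → A × B → A × B :=
  fun p q => (p.1 * q.1 + p.1 * α q.2 + q.1 * α p.2, p.2 * q.2)

/-- The extended bilinear form on `A ⊕ B`:
`g((x,v),(y,w)) = g_A(x,y) + g_A(α v, y) + g_A(x, α w) + g_B(v,w)`. -/
def extForm {K A B : Type*} [Field K] [CommRing A] [CommRing B]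
    [Algebra K A] [Algebra K B]
    (gA : A →ₗ[K] A →ₗ[K] K) (gB : B →ₗ[K] B →ₗ[K] K) (α : B →ₗ[K] A) :
    A × B → A × B → K :=
  fun p q => gA p.1 q.1 + gA (α p.2) q.1 + gA p.1 (α q.2) + gB p.2 q.2

/-- given finite-dimensional commutative associative unital `K`-algebras
`A`, `B`, a nondegenerate invariant symmetric form `g_A`, an invariant symmetric form
`g_B`, a unital algebra homomorphism `α : B → A`, and nondegeneracy of `g_B − α*g_A`,
the extended structure `(A ⊕ B, ∘, (0, e_B), g)` is a commutative Frobenius algebra: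
`∘` is commutative, associative, with unit `(0,1)`, and `g` is a nondegenerate symmetric
invariant bilinear form. -/
theorem stmt5 {K A B : Type*} [Field K] [CommRing A] [CommRing B]
    [Algebra K A] [Algebra K B] [FiniteDimensional K A] [FiniteDimensional K B]
    (gA : A →ₗ[K] A →ₗ[K] K) (hgAs : ∀ x y, gA x y = gA y x)
    (hgAinv : ∀ x y z : A, gA (x * y) z = gA x (y * z))
    (hgAnd : ∀ x : A, (∀ y : A, gA x y = 0) → x = 0)
    (gB : B →ₗ[K] B →ₗ[K] K) (hgBs : ∀ v w, gB v w = gB w v)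
    (hgBinv : ∀ u v w : B, gB (u * v) w = gB u (v * w))
    (α : B →ₗ[K] A) (hαmul : ∀ v w : B, α (v * w) = α v * α w)
    (hαone : α (1 : B) = (1 : A))
    (hnd : ∀ v : B, (∀ w : B, gB v w - gA (α v) (α w) = 0) → v = 0) :
    (∀ p q : A × B, extMul α p q = extMul α q p) ∧
    (∀ p q r : A × B, extMul α (extMul α p q) r = extMul α p (extMul α q r)) ∧
    (∀ p : A × B, extMul α p (0, 1) = p ∧ extMul α (0, 1) p = p) ∧
    (∀ p q : A × B, extForm gA gB α p q = extForm gA gB α q p) ∧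
    (∀ p : A × B, (∀ q : A × B, extForm gA gB α p q = 0) → p = 0) ∧
    (∀ p q r : A × B,
      extForm gA gB α (extMul α p q) r = extForm gA gB α p (extMul α q r)) := by

  have key : ∀ a b : A, gA a b = gA 1 (a * b) := fun a b => by
    rw [← hgAinv, one_mul]
  refine ⟨?_, ?_, ?_, ?_, ?_, ?_⟩
  · intro p q
    simp only [extMul, Prod.mk.injEq]
    constructor <;> ring
  · intro p q r
    simp only [extMul, hαmul, map_add, Prod.mk.injEq]
    constructor <;> ring
  · intro p
    simp [extMul, hαone]
  · intro p q
    simp only [extForm]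
    rw [hgAs p.1 q.1, hgAs (α p.2) q.1, hgAs p.1 (α q.2), hgBs]
    ring
  · rintro ⟨x, v⟩ h
    have h1 : x + α v = 0 := by
      apply hgAnd
      intro y
      have := h (y, 0)
      simpa [extForm] using this
    have hx : x = -α v := by linear_combination h1
    have h2 : v = 0 := by
      apply hnd
      intro w
      have := h (0, w)
      simp only [extForm] at this
      simp only [hx] at this ⊢
      simp only [map_zero, LinearMap.zero_apply, LinearMap.map_zero, map_neg,
        LinearMap.neg_apply, zero_add, neg_add_cancel, add_zero] at this ⊢
      linear_combination this
    subst h2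
    simp [hx]
  · intro p q r
    simp only [extForm, extMul, hαmul, map_add, LinearMap.add_apply, hgBinv]
    rw [key (p.1 * q.1) r.1, key (p.1 * α q.2) r.1, key (q.1 * α p.2) r.1,
        key (α p.2 * α q.2) r.1, key (p.1 * q.1) (α r.2), key (p.1 * α q.2) (α r.2),
        key (q.1 * α p.2) (α r.2),
        key p.1 (q.1 * r.1), key p.1 (q.1 * α r.2), key p.1 (r.1 * α q.2),
        key (α p.2) (q.1 * r.1), key (α p.2) (q.1 * α r.2), key (α p.2) (r.1 * α q.2),
        key p.1 (α q.2 * α r.2)]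
    simp only [← map_add]
    congr 1
    ring
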